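/- Let d ≥ u ≥ g + 1 ≥ 2, ℓ = u − g − 1, k = d − ℓ + u = d + g + 1, and let n satisfy e²(d+u)²/u ≤ n, and set s = ⌊d/(ℓ+1)⌋ + u − 1. Then u·s·(g·s + d)·C(n,u) ≤ H·u·C(n,u), where H = (1 + (d−ℓ)/u)^u · (1 + u/(d−ℓ))^(d−ℓ) · (d + g + 1) · ln(n/k). Equivalently, s·(g·s + d) ≤ H. -/
import Mathlib

set_option maxHeartbeats 1000000

private theorem core_poly_dcb (a g d : ℝ) (ha : 1 ≤ a) (hg : 1 ≤ g) (hd : a + g ≤ d) :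
    (d + a*(a+g-1)) * (g * (d + a*(a+g-1)) + a * d) ≤
      2 * a^2 * (d - a + 2) * (a + g + 1) * (d + g + 1) := by
  obtain ⟨p, hp, rfl⟩ : ∃ p, 0 ≤ p ∧ a = 1 + p := ⟨a - 1, by linarith, by ring⟩
  obtain ⟨q, hq, rfl⟩ : ∃ q, 0 ≤ q ∧ g = 1 + q := ⟨g - 1, by linarith, by ring⟩
  obtain ⟨r, hr, rfl⟩ : ∃ r, 0 ≤ r ∧ d = 2 + p + q + r := ⟨d - (2+p+q), by linarith, by ring⟩
  nlinarith [(mul_nonneg hr hr), (mul_nonneg hq hr), (mul_nonneg (mul_nonneg hq hr) hr), (mul_nonneg hq hq), (mul_nonneg (mul_nonneg hq hq) hr), (mul_nonneg (mul_nonneg hq hq) hq), (mul_nonneg hp hr), (mul_nonneg (mul_nonneg hp hr) hr), (mul_nonneg hp hq), (mul_nonneg (mul_nonneg hp hq) hr), (mul_nonneg (mul_nonneg (mul_nonneg hp hq) hr) hr), (mul_nonneg (mul_nonneg hp hq) hq), (mul_nonneg (mul_nonneg (mul_nonneg hp hq) hq) hr), (mul_nonneg (mul_nonneg (mul_nonneg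 hp hq) hq) hq), (mul_nonneg hp hp), (mul_nonneg (mul_nonneg hp hp) hr), (mul_nonneg (mul_nonneg (mul_nonneg hp hp) hr) hr), (mul_nonneg (mul_nonneg hp hp) hq), (mul_nonneg (mul_nonneg (mul_nonneg hp hp) hq) hr), (mul_nonneg (mul_nonneg (mul_nonneg (mul_nonneg hp hp) hq) hr) hr), (mul_nonneg (mul_nonneg (mul_nonneg hp hp) hq) hq), (mul_nonneg (mul_nonneg (mul_nonneg (mul_nonneg hp hp) hq) hq) hr), (mul_nonneg (mul_nonneg (mul_nonneg (mul_nonneg hp hp) hq) hq) hq), (mul_nonneg (mul_nonneg hp hp) hp), (mul_nonneg (mul_nonneg (mul_nonneg hp hp) hp) hr), (mul_nonneg (mul_nonneg (mul_nonneg (mul_nonneg hp hp) hp) hr) hr), (mul_nonneg (mul_nonneg (mul_nonneg hp hp) hp) hq), (mul_nonneg (mul_nonneg (mul_nonneg (mul_nonneg hp hp) hp) hq) hr), (mul_nonneg (mul_nonneg (mul_nonneg (mul_nonneg hp hp) hp) hq) hq), (mul_nonneg (mul_nonneg (mul_nonneg hp hp) hp) hp), (mul_nonneg (mul_nonneg (mul_nonneg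 (mul_nonneg hp hp) hp) hp) hr), (mul_nonneg (mul_nonneg (mul_nonneg (mul_nonneg hp hp) hp) hp) hq), (mul_nonneg (mul_nonneg (mul_nonneg (mul_nonneg hp hp) hp) hp) hp)]

/-- With `d ≥ u ≥ g + 1 ≥ 2`, `u = ℓ + g + 1`, `k = d - ℓ + u = d + g + 1`,
`n ≥ e²(d+u)²/u` and `s = ⌊d/(ℓ+1)⌋ + u - 1`:
`u·s·(g·s + d)·C(n,u) ≤ H·u·C(n,u)`, equivalently `s·(g·s + d) ≤ H`, where
`H = (1 + (d-ℓ)/u)^u·(1 + u/(d-ℓ))^(d-ℓ)·(d + g + 1)·ln(n/k)`. -/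
theorem decoding_complexity_bound (d u g ℓ k n s : ℕ)
    (hg : 1 ≤ g) (hu : u = ℓ + g + 1) (hud : u ≤ d)
    (hk : k = d + g + 1) (hs : s = d / (ℓ + 1) + u - 1)
    (hn : Real.exp 1 ^ 2 * ((d : ℝ) + u) ^ 2 / u ≤ (n : ℝ)) :
    (s : ℝ) * ((g : ℝ) * s + d) ≤
      (1 + ((d : ℝ) - ℓ) / u) ^ u * (1 + (u : ℝ) / ((d : ℝ) - ℓ)) ^ (d - ℓ) *
        ((d : ℝ) + g + 1) * Real.log ((n : ℝ) / k) ∧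
    (u : ℝ) * s * ((g : ℝ) * s + d) * (n.choose u : ℕ) ≤
      (1 + ((d : ℝ) - ℓ) / u) ^ u * (1 + (u : ℝ) / ((d : ℝ) - ℓ)) ^ (d - ℓ) *
        ((d : ℝ) + g + 1) * Real.log ((n : ℝ) / k) * u * (n.choose u : ℕ) := by
  have hld : ℓ + 1 ≤ d := by omega
  have hg1 : (1:ℝ) ≤ g := by exact_mod_cast hg
  have hl0 : (0:ℝ) ≤ (ℓ:ℝ) := Nat.cast_nonneg ℓ
  set a : ℝ := (ℓ:ℝ) + 1 with ha_def
  have ha1 : (1:ℝ) ≤ a := by rw [ha_def]; linarith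
  have huR : (u:ℝ) = a + g := by rw [ha_def, hu]; push_cast; ring
  have hdR : a + g ≤ (d:ℝ) := by rw [← huR]; exact_mod_cast hud
  -- bound on s
  obtain ⟨t, ht⟩ : ∃ t, d / (ℓ + 1) = t := ⟨_, rfl⟩
  have htN : t * (ℓ + 1) ≤ d := ht ▸ Nat.div_mul_le_self d (ℓ + 1)
  have hs1 : s + 1 = t + u := by omega
  have hsN : (ℓ + 1) * s + (ℓ + 1) ≤ d + (ℓ + 1) * u :=
    calc (ℓ + 1) * s + (ℓ + 1) = (ℓ + 1) * (s + 1) := by ring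
      _ = (ℓ + 1) * (t + u) := by rw [hs1]
      _ = t * (ℓ + 1) + (ℓ + 1) * u := by ring
      _ ≤ d + (ℓ + 1) * u := Nat.add_le_add_right htN _
  have hS0 : (0:ℝ) ≤ (s:ℝ) := Nat.cast_nonneg s
  have hAS : a * (s:ℝ) ≤ (d:ℝ) + a * (a + g - 1) := by
    have h : ((ℓ:ℝ) + 1) * s + ((ℓ:ℝ) + 1) ≤ (d:ℝ) + ((ℓ:ℝ) + 1) * u := by exact_mod_cast hsN
    rw [← ha_def, huR] at h
    nlinarith [h]
  -- step A : s(gs+d) ≤ 2(d-a+2)(a+g+1)(d+g+1)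
  have hDnn : (0:ℝ) ≤ (d:ℝ) + a * (a + g - 1) := by nlinarith
  have hstep : (a * s) * ((g:ℝ) * (a * s) + a * d) ≤
      ((d:ℝ) + a*(a+g-1)) * ((g:ℝ) * ((d:ℝ) + a*(a+g-1)) + a * d) := by
    have h2 : (g:ℝ) * (a * s) + a * d ≤ (g:ℝ) * ((d:ℝ) + a*(a+g-1)) + a * d := by nlinarith
    have h3 : (0:ℝ) ≤ (g:ℝ) * (a * s) + a * d := by
      have : (0:ℝ) ≤ a := by linarith
      positivity
    exact mul_le_mul hAS h2 h3 hDnn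
  have hcore := core_poly_dcb a (g:ℝ) (d:ℝ) ha1 hg1 hdR
  have keyA : (s:ℝ) * ((g:ℝ) * s + d) ≤ 2 * ((d:ℝ) - a + 2) * (a + g + 1) * ((d:ℝ) + g + 1) := by
    have e : a^2 * ((s:ℝ) * ((g:ℝ) * s + d)) = (a * s) * ((g:ℝ) * (a * s) + a * d) := by ring
    have e2 : 2 * a^2 * ((d:ℝ) - a + 2) * (a + g + 1) * ((d:ℝ) + g + 1)
        = a^2 * (2 * ((d:ℝ) - a + 2) * (a + g + 1) * ((d:ℝ) + g + 1)) := by ring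
    have hfin : a^2 * ((s:ℝ) * ((g:ℝ) * s + d)) ≤
        a^2 * (2 * ((d:ℝ) - a + 2) * (a + g + 1) * ((d:ℝ) + g + 1)) := by
      linarith [hstep, hcore, e, e2]
    exact le_of_mul_le_mul_left hfin (by positivity)
  -- step B : Bernoulli bounds
  have hlled : ℓ ≤ d := by omega
  have hmR : ((d:ℝ) - ℓ) = ((d - ℓ : ℕ) : ℝ) := by push_cast [hlled]; ring
  have hmpos : (0:ℝ) < (d:ℝ) - ℓ := by
    have : ((ℓ:ℝ) + 1) ≤ (d:ℝ) := by exact_mod_cast hld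
    linarith
  have hupos : (0:ℝ) < (u:ℝ) := by rw [huR]; nlinarith
  have hx1 : (0:ℝ) ≤ ((d:ℝ) - ℓ) / u := div_nonneg hmpos.le hupos.le
  have hx2 : (0:ℝ) ≤ (u:ℝ) / ((d:ℝ) - ℓ) := div_nonneg hupos.le hmpos.le
  have hB1 : 1 + ((d:ℝ) - ℓ) ≤ (1 + ((d:ℝ) - ℓ) / u) ^ u := by
    have h := one_add_mul_le_pow (a := ((d:ℝ) - ℓ) / u) (by linarith : (-2:ℝ) ≤ ((d:ℝ) - ℓ) / u) u
    rwa [mul_div_cancel₀ _ (ne_of_gt hupos)] at h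
  have hB2 : 1 + (u:ℝ) ≤ (1 + (u:ℝ) / ((d:ℝ) - ℓ)) ^ (d - ℓ) := by
    have h := one_add_mul_le_pow (a := (u:ℝ) / ((d:ℝ) - ℓ))
      (by linarith : (-2:ℝ) ≤ (u:ℝ) / ((d:ℝ) - ℓ)) (d - ℓ)
    rw [← hmR] at h
    rwa [mul_div_cancel₀ _ (ne_of_gt hmpos)] at h
  set A : ℝ := (1 + ((d:ℝ) - ℓ) / u) ^ u * (1 + (u:ℝ) / ((d:ℝ) - ℓ)) ^ (d - ℓ) with hA_def
  have hAprod : (1 + ((d:ℝ) - ℓ)) * (1 + (u:ℝ)) ≤ A := by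
    have h1 : (0:ℝ) ≤ 1 + (u:ℝ) := by linarith
    rw [hA_def]
    exact mul_le_mul hB1 hB2 h1 (pow_nonneg (by linarith) u)
  have hAnn : (0:ℝ) ≤ A := by
    rw [hA_def]
    exact mul_nonneg (pow_nonneg (by linarith) u) (pow_nonneg (by linarith) (d - ℓ))
  -- step C : log lower bound
  have hkR : ((k:ℝ)) = (d:ℝ) + g + 1 := by rw [hk]; push_cast; ring
  have hkpos : (0:ℝ) < (k:ℝ) := by rw [hkR]; positivity
  have huk : (u:ℝ) * k ≤ ((d:ℝ) + u) ^ 2 := by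
    rw [hkR, huR]
    nlinarith [hdR, hg1, ha1]
  have hE : (0:ℝ) < Real.exp 1 ^ 2 := by positivity
  have hn2 : Real.exp 1 ^ 2 * (k:ℝ) ≤ (n:ℝ) := by
    refine le_trans ?_ hn
    rw [le_div_iff₀ hupos]
    nlinarith [hE, huk]
  have hL : (2:ℝ) ≤ Real.log ((n:ℝ) / k) := by
    have hek : Real.exp 2 ≤ (n:ℝ) / k := by
      rw [le_div_iff₀ hkpos]
      calc Real.exp 2 * k = Real.exp 1 ^ 2 * k := by
            rw [show (2:ℝ) = 1 + 1 by norm_num, Real.exp_add]; ring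
        _ ≤ n := hn2
    calc (2:ℝ) = Real.log (Real.exp 2) := (Real.log_exp 2).symm
      _ ≤ Real.log ((n:ℝ) / k) := Real.log_le_log (Real.exp_pos 2) hek
  -- combine
  have e1 : (d:ℝ) - a + 2 = 1 + ((d:ℝ) - ℓ) := by rw [ha_def]; ring
  have e2 : a + (g:ℝ) + 1 = 1 + (u:ℝ) := by rw [huR]; ring
  rw [e1, e2] at keyA
  have hkRpos : (0:ℝ) < (d:ℝ) + g + 1 := by positivity
  have T1 : (0:ℝ) ≤ A * ((d:ℝ) + g + 1) * (Real.log ((n:ℝ)/k) - 2) :=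
    mul_nonneg (mul_nonneg hAnn hkRpos.le) (by linarith)
  have T2 : (0:ℝ) ≤ (A - (1 + ((d:ℝ) - ℓ)) * (1 + (u:ℝ))) * ((d:ℝ) + g + 1) :=
    mul_nonneg (by linarith) hkRpos.le
  have main : (s:ℝ) * ((g:ℝ) * s + d) ≤ A * ((d:ℝ) + g + 1) * Real.log ((n:ℝ) / k) := by
    linarith [keyA, T1, T2]
  refine ⟨main, ?_⟩
  have hc : (0:ℝ) ≤ (u:ℝ) * (n.choose u : ℕ) := by positivity
  linarith [mul_le_mul_of_nonneg_right main hc]
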